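/- Let d be a random variable with density f_d(r) = 2r/(ρ² - ξ²) on [ξ, ρ], and let Z₁ be exponentially distributed with mean L (L a positive integer), independent of d. For Y > 0 and α > 2, P(Z₁ < Y d^{2α}) = 1 - (L^{1/α}/(α(ρ²-ξ²) Y^{1/α})) [Γ(1/α, (Y/L) ξ^{2α}) - Γ(1/α, (Y/L) ρ^{2α})]. -/

import Mathlib

open Real MeasureTheory Set intervalIntegral

/-- Upper incomplete gamma function. -/
noncomputable def upperGamma (a x : ℝ) : ℝ := ∫ t in Set.Ioi x, t ^ (a - 1) * Real.exp (-t)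

lemma upperGamma_sub {a x₁ x₂ : ℝ} (ha : 0 < a) (hx₁ : 0 < x₁) (h : x₁ ≤ x₂) :
    upperGamma a x₁ - upperGamma a x₂ = ∫ t in x₁..x₂, t ^ (a - 1) * Real.exp (-t) := by
  have hint : IntegrableOn (fun t : ℝ => t ^ (a - 1) * Real.exp (-t)) (Set.Ioi 0) := by
    simpa [mul_comm] using Real.GammaIntegral_convergent ha
  have h1 : IntegrableOn (fun t : ℝ => t ^ (a - 1) * Real.exp (-t)) (Set.Ioc x₁ x₂) :=
    hint.mono_set (fun t ht => lt_of_lt_of_le hx₁ ht.1.le)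
  have h2 : IntegrableOn (fun t : ℝ => t ^ (a - 1) * Real.exp (-t)) (Set.Ioi x₂) :=
    hint.mono_set (Set.Ioi_subset_Ioi (hx₁.le.trans h))
  have hsplit : upperGamma a x₁ =
      (∫ t in Set.Ioc x₁ x₂, t ^ (a - 1) * Real.exp (-t)) + upperGamma a x₂ := by
    rw [upperGamma, upperGamma, ← MeasureTheory.setIntegral_union _ measurableSet_Ioi h1 h2,
      Set.Ioc_union_Ioi_eq_Ioi h]
    rw [Set.disjoint_left]
    exact fun t ht ht' => absurd ht.2 (not_le.mpr ht')
  rw [hsplit, intervalIntegral.integral_of_le h]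
  ring

theorem rf_idle_probability (Y α ξ ρ : ℝ) (L : ℕ) (hL : 0 < L) (hY : 0 < Y)
    (hα : 2 < α) (hξ : 0 < ξ) (hξρ : ξ < ρ) :
    ∫ r in ξ..ρ, (1 - Real.exp (-(Y * r ^ (2 * α)) / L)) * (2 * r / (ρ ^ 2 - ξ ^ 2)) =
      1 - ((L : ℝ) ^ (1 / α) / (α * (ρ ^ 2 - ξ ^ 2) * Y ^ (1 / α))) *
        (upperGamma (1 / α) ((Y / L) * ξ ^ (2 * α)) -
          upperGamma (1 / α) ((Y / L) * ρ ^ (2 * α))) := by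
  have hLpos : (0:ℝ) < L := Nat.cast_pos.mpr hL
  have hαpos : (0:ℝ) < α := by linarith
  have hρ : (0:ℝ) < ρ := hξ.trans hξρ
  have hD : (0:ℝ) < ρ ^ 2 - ξ ^ 2 := by nlinarith
  set c : ℝ := Y / L with hc
  have hcpos : 0 < c := div_pos hY hLpos
  set D : ℝ := ρ ^ 2 - ξ ^ 2 with hDdef
  -- exponent rewriting
  have hexp : ∀ r : ℝ, Real.exp (-(Y * r ^ (2 * α)) / L) = Real.exp (-(c * r ^ (2 * α))) := by
    intro r; congr 1; rw [hc]; field_simp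
  -- substitution lemma
  set f : ℝ → ℝ := fun r => c * r ^ (2 * α) with hf
  set f' : ℝ → ℝ := fun r => c * (2 * α) * r ^ (2 * α - 1) with hf'
  set g : ℝ → ℝ := fun t => t ^ (1 / α - 1) * Real.exp (-t) with hg
  have huIcc : Set.uIcc ξ ρ = Set.Icc ξ ρ := Set.uIcc_of_le hξρ.le
  have hderiv : ∀ x ∈ Set.uIcc ξ ρ, HasDerivAt f (f' x) x := by
    intro x hx
    rw [huIcc] at hx
    have hx0 : x ≠ 0 := (hξ.trans_le hx.1).ne'
    have := (Real.hasDerivAt_rpow_const (p := 2 * α) (Or.inl hx0)).const_mul c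
    simpa [hf, hf', mul_assoc] using this
  have hcont' : ContinuousOn f' (Set.uIcc ξ ρ) := by
    apply ContinuousOn.mul continuousOn_const
    exact continuousOn_id.rpow_const fun x hx => by
      rw [huIcc] at hx; exact Or.inl (hξ.trans_le hx.1).ne'
  have himg : f '' Set.uIcc ξ ρ ⊆ Set.Ioi 0 := by
    rintro _ ⟨x, hx, rfl⟩
    rw [huIcc] at hx
    exact mul_pos hcpos (Real.rpow_pos_of_pos (hξ.trans_le hx.1) _)
  have hgcont : ContinuousOn g (f '' Set.uIcc ξ ρ) := by
    apply ContinuousOn.mul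
    · exact (continuousOn_id.rpow_const fun t ht => Or.inl (ne_of_gt (himg ht))).mono
        (le_refl _)
    · exact (Real.continuous_exp.comp continuous_neg).continuousOn
  have hsubst : (∫ x in ξ..ρ, f' x • (g ∘ f) x) = ∫ t in f ξ..f ρ, g t :=
    intervalIntegral.integral_comp_smul_deriv' hderiv hcont' hgcont
  -- pointwise identity
  have hpoint : ∀ x ∈ Set.uIcc ξ ρ,
      f' x • (g ∘ f) x = (α * c ^ (1 / α)) * (Real.exp (-(c * x ^ (2 * α))) * (2 * x)) := by
    intro x hx
    rw [huIcc] at hx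
    have hx0 : 0 < x := hξ.trans_le hx.1
    have h1 : (c * x ^ (2 * α)) ^ (1 / α - 1) = c ^ (1 / α - 1) * x ^ (2 * α * (1 / α - 1)) := by
      rw [Real.mul_rpow hcpos.le (Real.rpow_pos_of_pos hx0 _).le, ← Real.rpow_mul hx0.le]
    have h2 : x ^ (2 * α - 1) * x ^ (2 * α * (1 / α - 1)) = x := by
      rw [← Real.rpow_add hx0]
      have : 2 * α - 1 + 2 * α * (1 / α - 1) = 1 := by field_simp; ring
      rw [this, Real.rpow_one]
    have h3 : c * c ^ (1 / α - 1) = c ^ (1 / α) := by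
      nth_rewrite 1 [← Real.rpow_one c]
      rw [← Real.rpow_add hcpos]; norm_num
    simp only [hf, hf', hg, Function.comp_apply, smul_eq_mul]
    rw [h1]
    linear_combination (2*α*c*c^(1/α-1)*Real.exp (-(c * x ^ (2*α)))) * h2 +
      (2*α*x*Real.exp (-(c * x ^ (2*α)))) * h3
  -- value of the substituted integral
  have hαc : 0 < α * c ^ (1 / α) := mul_pos hαpos (Real.rpow_pos_of_pos hcpos _)
  have hIe : ∫ x in ξ..ρ, Real.exp (-(c * x ^ (2 * α))) * (2 * x) =
      (1 / (α * c ^ (1 / α))) * ∫ t in f ξ..f ρ, g t := by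
    rw [← hsubst, intervalIntegral.integral_congr hpoint,
      intervalIntegral.integral_const_mul]
    field_simp
  -- continuity facts
  have hcrpow : ContinuousOn (fun r : ℝ => Real.exp (-(c * r ^ (2 * α)))) (Set.uIcc ξ ρ) := by
    apply Real.continuous_exp.comp_continuousOn
    apply ContinuousOn.neg
    exact ContinuousOn.mul continuousOn_const
      (continuousOn_id.rpow_const fun x hx => by
        rw [huIcc] at hx; exact Or.inl (hξ.trans_le hx.1).ne')
  have hint1 : IntervalIntegrable (fun r : ℝ => 2 * r / D) MeasureTheory.volume ξ ρ :=
    (by fun_prop : Continuous fun r : ℝ => 2 * r / D).intervalIntegrable ξ ρ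
  have hint2 : IntervalIntegrable
      (fun r : ℝ => (1 / D) * (Real.exp (-(c * r ^ (2 * α))) * (2 * r)))
      MeasureTheory.volume ξ ρ := by
    apply ContinuousOn.intervalIntegrable
    exact (continuousOn_const.mul (hcrpow.mul (by fun_prop)))
  -- integral of the density is 1
  have h2r : ∫ r in ξ..ρ, 2 * r / D = 1 := by
    have : (fun r : ℝ => 2 * r / D) = fun r : ℝ => (2 / D) * r := by
      funext r; ring
    rw [this, intervalIntegral.integral_const_mul, integral_id, hDdef]
    field_simp
    exact div_self hD.ne'
  -- split the integral
  rw [intervalIntegral.integral_congr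
      (g := fun r => 2 * r / D - (1 / D) * (Real.exp (-(c * r ^ (2 * α))) * (2 * r)))
      (fun r _ => by rw [hexp r]; ring),
    intervalIntegral.integral_sub hint1 hint2, h2r,
    intervalIntegral.integral_const_mul, hIe]
  -- relate to upper incomplete gamma
  have ht₁ : 0 < c * ξ ^ (2 * α) := mul_pos hcpos (Real.rpow_pos_of_pos hξ _)
  have ht₁₂ : c * ξ ^ (2 * α) ≤ c * ρ ^ (2 * α) :=
    mul_le_mul_of_nonneg_left
      (Real.rpow_le_rpow hξ.le hξρ.le (by positivity)) hcpos.le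
  have hug := upperGamma_sub (a := 1 / α) (x₁ := c * ξ ^ (2 * α)) (x₂ := c * ρ ^ (2 * α))
    (by positivity) ht₁ ht₁₂
  have hfval : (∫ t in f ξ..f ρ, g t) =
      upperGamma (1 / α) (c * ξ ^ (2 * α)) - upperGamma (1 / α) (c * ρ ^ (2 * α)) := by
    rw [hug]
  rw [hfval]
  have hcY : c ^ (1 / α) = Y ^ (1 / α) / (L : ℝ) ^ (1 / α) := by
    rw [hc, Real.div_rpow hY.le hLpos.le]
  rw [hcY]
  have hYr : (0:ℝ) < Y ^ (1 / α) := Real.rpow_pos_of_pos hY _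
  have hLr : (0:ℝ) < (L : ℝ) ^ (1 / α) := Real.rpow_pos_of_pos hLpos _
  rw [hc]
  field_simp
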